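/- Every graph obtained from K_6 by a 4-split of a vertex contains K_{3,3}+v as a minor. -/
import Mathlib


/-- `K₃,₃ + v`: `K₃,₃` with parts `{0,1,2}`, `{3,4,5}`, plus a new vertex `6`
adjacent to the 4-cycle `0,3,1,4`. -/
def K33v : SimpleGraph (Fin 7) :=
  SimpleGraph.fromEdgeSet
    {s(0,3), s(0,4), s(0,5), s(1,3), s(1,4), s(1,5), s(2,3), s(2,4), s(2,5),
     s(6,0), s(6,3), s(6,1), s(6,4)}

/-- A graph is 4-connected if it has at least 5 vertices and deleting any
set of at most 3 vertices leaves it connected. -/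
def FourConnected {V : Type*} (G : SimpleGraph V) : Prop :=
  5 ≤ Nat.card V ∧
  ∀ S : Set V, S.Finite → S.ncard ≤ 3 → (G.induce Sᶜ).Connected

/-- `H` is a minor of `G`: there are nonempty, pairwise disjoint, connected
branch sets in `G`, one for each vertex of `H`, with an edge of `G` between
the branch sets of every pair of adjacent vertices of `H`. -/
def IsMinor {α β : Type*} (H : SimpleGraph α) (G : SimpleGraph β) : Prop :=
  ∃ φ : α → Set β,
    (∀ x, (φ x).Nonempty) ∧
    (∀ x, (G.induce (φ x)).Connected) ∧
    (Pairwise fun x y => Disjoint (φ x) (φ y)) ∧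
    ∀ x y, H.Adj x y → ∃ u ∈ φ x, ∃ w ∈ φ y, G.Adj u w

/-- The double wheel `DW n`: a cycle on `Fin n` plus two adjacent hubs
joined to all cycle vertices. -/
def DW (n : ℕ) : SimpleGraph (Fin n ⊕ Fin 2) :=
  SimpleGraph.fromRel fun u v =>
    match u, v with
    | Sum.inl i, Sum.inl j => (i.val + 1) % n = j.val
    | Sum.inl _, Sum.inr _ => True
    | Sum.inr _, Sum.inl _ => True
    | Sum.inr _, Sum.inr _ => True

/-- The square of the `n`-cycle: `i ~ j` iff `i - j ≡ ±1, ±2 (mod n)`. -/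
def CycleSq (n : ℕ) : SimpleGraph (ZMod n) :=
  SimpleGraph.fromRel fun i j => i - j = 1 ∨ i - j = 2

/-- `G'` is obtained from `G` by the 4-split of `v` with sets `A`, `B`:
`A ∪ B = N(v)`, `|A|,|B| ≥ 3`, and `G'` consists of a copy of `G - v`
(via `f`) together with two new adjacent vertices `a`, `b` where `a` is
additionally adjacent exactly to `A` and `b` exactly to `B`. -/
def IsFourSplitOn {V W : Type*} (G : SimpleGraph V) (v : V) (A B : Set V)
    (G' : SimpleGraph W) : Prop :=
  A ∪ B = G.neighborSet v ∧ 3 ≤ A.ncard ∧ 3 ≤ B.ncard ∧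
  ∃ (f : {u : V // u ≠ v} → W) (a b : W),
    Function.Injective f ∧ a ≠ b ∧
    (∀ u, f u ≠ a) ∧ (∀ u, f u ≠ b) ∧
    (∀ w : W, w = a ∨ w = b ∨ ∃ u, f u = w) ∧
    G'.Adj a b ∧
    (∀ u u' : {u : V // u ≠ v}, G'.Adj (f u) (f u') ↔ G.Adj u.1 u'.1) ∧
    (∀ u : {u : V // u ≠ v}, G'.Adj a (f u) ↔ u.1 ∈ A) ∧
    (∀ u : {u : V // u ≠ v}, G'.Adj b (f u) ↔ u.1 ∈ B)

/-- `G'` is obtained from `G` by a 4-split of the vertex `v`. -/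
def IsFourSplit {V W : Type*} (G : SimpleGraph V) (v : V)
    (G' : SimpleGraph W) : Prop :=
  ∃ A B : Set V, IsFourSplitOn G v A B G'

/-- The graph `Γ₁`: vertices `v₁,…,v₅ = 0,…,4`, `a = 5`, `b = 6`;
4-cycle `v₁v₂v₃v₄`, `v₅` adjacent to `v₁,v₂,v₃,v₄`, `a` adjacent to
`v₁,v₃,v₅,b`, and `b` adjacent to `v₂,v₃,v₄,a`. -/
def Gamma1 : SimpleGraph (Fin 7) :=
  SimpleGraph.fromEdgeSet
    {s(0,1), s(1,2), s(2,3), s(3,0),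
     s(4,0), s(4,1), s(4,2), s(4,3),
     s(5,0), s(5,2), s(5,4), s(5,6),
     s(6,1), s(6,2), s(6,3)}

lemma induce_singleton_connected {W : Type*} (G : SimpleGraph W) (x : W) :
    (G.induce {x}).Connected := by
  haveI : Nonempty ({x} : Set W) := ⟨⟨x, rfl⟩⟩
  refine ⟨fun u w => ?_⟩
  have : u = w := Subtype.ext (u.2.trans w.2.symm)
  exact this ▸ SimpleGraph.Reachable.refl u

lemma pick_four (A B : Set (Fin 6)) (hA : 3 ≤ A.ncard) (hB : 3 ≤ B.ncard)
    (hU : 4 ≤ (A ∪ B).ncard) :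
    ∃ p q r s : Fin 6, p ∈ A ∧ q ∈ A ∧ r ∈ B ∧ s ∈ B ∧
      p ≠ q ∧ p ≠ r ∧ p ≠ s ∧ q ≠ r ∧ q ≠ s ∧ r ≠ s := by
  rcases Nat.lt_or_ge (A \ B).ncard 2 with hd | hd
  · rcases Nat.lt_or_ge (A \ B).ncard 1 with h0 | h1
    · -- A ⊆ B
      have hAB : A ⊆ B := by
        rw [← Set.diff_eq_empty]
        exact (Set.ncard_eq_zero (Set.toFinite _)).1 (by omega)
      have hB4 : 4 ≤ B.ncard :=
        le_trans hU (Set.ncard_le_ncard (Set.union_subset hAB subset_rfl) (Set.toFinite _))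
      obtain ⟨p, hp, q, hq, hpq⟩ :=
        (Set.one_lt_ncard (Set.toFinite A)).1 (by omega)
      have hpair : ({p, q} : Set (Fin 6)).ncard = 2 := Set.ncard_pair hpq
      have hle := Set.le_ncard_diff ({p, q} : Set (Fin 6)) B (Set.toFinite _)
      obtain ⟨r, hr, s, hs, hrs⟩ :=
        (Set.one_lt_ncard (Set.toFinite (B \ {p, q}))).1 (by omega)
      have hrp : r ∉ ({p, q} : Set (Fin 6)) := hr.2
      have hsp : s ∉ ({p, q} : Set (Fin 6)) := hs.2
      simp only [Set.mem_insert_iff, Set.mem_singleton_iff, not_or] at hrp hsp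
      exact ⟨p, q, r, s, hp, hq, hr.1, hs.1, hpq,
        fun h => hrp.1 h.symm, fun h => hsp.1 h.symm,
        fun h => hrp.2 h.symm, fun h => hsp.2 h.symm, hrs⟩
    · -- |A \ B| = 1
      obtain ⟨p, hp⟩ := (Set.ncard_pos (Set.toFinite (A \ B))).1 (by omega)
      have hcap := Set.ncard_inter_add_ncard_diff_eq_ncard A B (Set.toFinite _)
      obtain ⟨q, hq⟩ := (Set.ncard_pos (Set.toFinite (A ∩ B))).1 (by omega)
      have hle := Set.pred_ncard_le_ncard_diff_singleton B q
      obtain ⟨r, hr, s, hs, hrs⟩ :=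
        (Set.one_lt_ncard (Set.toFinite (B \ {q}))).1 (by omega)
      have hrq : r ≠ q := hr.2
      have hsq : s ≠ q := hs.2
      have hpB : p ∉ B := hp.2
      exact ⟨p, q, r, s, hp.1, hq.1, hr.1, hs.1,
        fun h => hpB (h ▸ hq.2), fun h => hpB (h ▸ hr.1), fun h => hpB (h ▸ hs.1),
        fun h => hrq h.symm, fun h => hsq h.symm, hrs⟩
  · -- |A \ B| ≥ 2
    obtain ⟨p, hp, q, hq, hpq⟩ :=
      (Set.one_lt_ncard (Set.toFinite (A \ B))).1 (by omega)
    obtain ⟨r, hr, s, hs, hrs⟩ :=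
      (Set.one_lt_ncard (Set.toFinite B)).1 (by omega)
    exact ⟨p, q, r, s, hp.1, hq.1, hr, hs, hpq,
      fun h => hp.2 (h ▸ hr), fun h => hp.2 (h ▸ hs),
      fun h => hq.2 (h ▸ hr), fun h => hq.2 (h ▸ hs), hrs⟩

/-- Every graph obtained from `K₆` by a 4-split of a vertex contains
`K₃,₃ + v` as a minor. -/
theorem stmt_16 {W : Type*} (G' : SimpleGraph W) (v : Fin 6)
    (h : IsFourSplit (⊤ : SimpleGraph (Fin 6)) v G') : IsMinor K33v G' := by
  obtain ⟨A, B, hUn, hA, hB, f, a, b, hfinj, hab, hfa, hfb, hcov, hGab, hff, haf, hbf⟩ := h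
  have hNv : A ∪ B = ({v}ᶜ : Set (Fin 6)) := by
    rw [hUn]; ext u; simp [SimpleGraph.neighborSet, eq_comm]
  have h5 : (({v}ᶜ : Set (Fin 6))).ncard = 5 := by
    have h := Set.ncard_add_ncard_compl ({v} : Set (Fin 6))
    simp [Nat.card_eq_fintype_card] at h
    omega
  obtain ⟨p, q, r, s, hpA, hqA, hrB, hsB, hpq, hpr, hps, hqr, hqs, hrs⟩ :=
    pick_four A B hA hB (by rw [hNv, h5]; omega)
  have hvne : ∀ u ∈ A ∪ B, u ≠ v := by
    intro u hu heq
    rw [hNv] at hu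
    exact hu heq
  have hpv : p ≠ v := hvne p (Or.inl hpA)
  have hqv : q ≠ v := hvne q (Or.inl hqA)
  have hrv : r ≠ v := hvne r (Or.inr hrB)
  have hsv : s ≠ v := hvne s (Or.inr hsB)
  -- pick the fifth vertex t
  have h4 : ({p, q, r, s} : Set (Fin 6)).ncard ≤ 4 := by
    have h1 := Set.ncard_insert_le p ({q, r, s} : Set (Fin 6))
    have h2 := Set.ncard_insert_le q ({r, s} : Set (Fin 6))
    have h3 := Set.ncard_insert_le r ({s} : Set (Fin 6))
    have h4 := Set.ncard_singleton s
    omega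
  have hle := Set.le_ncard_diff ({p, q, r, s} : Set (Fin 6)) ({v}ᶜ) (Set.toFinite _)
  obtain ⟨t, ht⟩ := (Set.ncard_pos (Set.toFinite _)).1
    (show 0 < (({v}ᶜ \ {p, q, r, s} : Set (Fin 6))).ncard by omega)
  have htv : t ≠ v := fun heq => ht.1 heq
  have ht2 := ht.2
  simp only [Set.mem_insert_iff, Set.mem_singleton_iff, not_or] at ht2
  obtain ⟨htp, htq, htr, hts⟩ := ht2
  -- the seven branch vertices
  set P : {u : Fin 6 // u ≠ v} := ⟨p, hpv⟩ with hP
  set Q : {u : Fin 6 // u ≠ v} := ⟨q, hqv⟩ with hQ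
  set R : {u : Fin 6 // u ≠ v} := ⟨r, hrv⟩ with hR
  set S : {u : Fin 6 // u ≠ v} := ⟨s, hsv⟩ with hS
  set T : {u : Fin 6 // u ≠ v} := ⟨t, htv⟩ with hT
  have hFF : ∀ (u u' : {u : Fin 6 // u ≠ v}), u.1 ≠ u'.1 → G'.Adj (f u) (f u') :=
    fun u u' hne => (hff u u').2 ((SimpleGraph.top_adj _ _).mpr hne)
  have hne_fs : ∀ (u u' : {u : Fin 6 // u ≠ v}), u.1 ≠ u'.1 → f u ≠ f u' :=
    fun u u' hne hh => hne (congrArg Subtype.val (hfinj hh))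
  -- adjacency facts
  have h03 : G'.Adj (f R) (f P) := hFF R P (fun h => hpr h.symm)
  have h04 : G'.Adj (f R) (f Q) := hFF R Q (fun h => hqr h.symm)
  have h05 : G'.Adj (f R) b := ((hbf R).2 hrB).symm
  have h13 : G'.Adj (f S) (f P) := hFF S P (fun h => hps h.symm)
  have h14 : G'.Adj (f S) (f Q) := hFF S Q (fun h => hqs h.symm)
  have h15 : G'.Adj (f S) b := ((hbf S).2 hsB).symm
  have h23 : G'.Adj a (f P) := (haf P).2 hpA
  have h24 : G'.Adj a (f Q) := (haf Q).2 hqA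
  have h25 : G'.Adj a b := hGab
  have h60 : G'.Adj (f T) (f R) := hFF T R htr
  have h63 : G'.Adj (f T) (f P) := hFF T P htp
  have h61 : G'.Adj (f T) (f S) := hFF T S hts
  have h64 : G'.Adj (f T) (f Q) := hFF T Q htq
  have h01 : G'.Adj (f R) (f S) := hFF R S hrs
  refine ⟨fun x => {(![f R, f S, a, f P, f Q, b, f T]) x}, fun x => ⟨_, rfl⟩,
    fun x => induce_singleton_connected G' _, ?_, ?_⟩
  · intro x y hxy
    have hqp := hpq.symm
    have hrp := hpr.symm
    have hsp := hps.symm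
    have hrq := hqr.symm
    have hsq := hqs.symm
    have hsr := hrs.symm
    have hpt := Ne.symm htp
    have hqt := Ne.symm htq
    have hrt := Ne.symm htr
    have hst := Ne.symm hts
    fin_cases x <;> fin_cases y <;>
      first
      | exact absurd rfl hxy
      | exact Set.disjoint_singleton.mpr (hne_fs _ _ (by assumption))
      | exact Set.disjoint_singleton.mpr hab
      | exact Set.disjoint_singleton.mpr hab.symm
      | exact Set.disjoint_singleton.mpr (hfa _)
      | exact Set.disjoint_singleton.mpr (hfa _).symm
      | exact Set.disjoint_singleton.mpr (hfb _)
      | exact Set.disjoint_singleton.mpr (hfb _).symm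
  · intro x y hxy
    fin_cases x <;> fin_cases y <;>
      simp only [K33v, SimpleGraph.fromEdgeSet_adj, Set.mem_insert_iff,
        Set.mem_singleton_iff, Sym2.eq, Sym2.rel_iff', Prod.mk.injEq,
        Prod.swap_prod_mk, ne_eq, Fin.ext_iff, Fin.isValue] at hxy <;>
      first
      | exact absurd hxy (by decide)
      | exact ⟨_, rfl, _, rfl, h03⟩
      | exact ⟨_, rfl, _, rfl, h03.symm⟩
      | exact ⟨_, rfl, _, rfl, h04⟩
      | exact ⟨_, rfl, _, rfl, h04.symm⟩
      | exact ⟨_, rfl, _, rfl, h05⟩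
      | exact ⟨_, rfl, _, rfl, h05.symm⟩
      | exact ⟨_, rfl, _, rfl, h13⟩
      | exact ⟨_, rfl, _, rfl, h13.symm⟩
      | exact ⟨_, rfl, _, rfl, h14⟩
      | exact ⟨_, rfl, _, rfl, h14.symm⟩
      | exact ⟨_, rfl, _, rfl, h15⟩
      | exact ⟨_, rfl, _, rfl, h15.symm⟩
      | exact ⟨_, rfl, _, rfl, h23⟩
      | exact ⟨_, rfl, _, rfl, h23.symm⟩
      | exact ⟨_, rfl, _, rfl, h24⟩
      | exact ⟨_, rfl, _, rfl, h24.symm⟩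
      | exact ⟨_, rfl, _, rfl, h25⟩
      | exact ⟨_, rfl, _, rfl, h25.symm⟩
      | exact ⟨_, rfl, _, rfl, h60⟩
      | exact ⟨_, rfl, _, rfl, h60.symm⟩
      | exact ⟨_, rfl, _, rfl, h63⟩
      | exact ⟨_, rfl, _, rfl, h63.symm⟩
      | exact ⟨_, rfl, _, rfl, h61⟩
      | exact ⟨_, rfl, _, rfl, h61.symm⟩
      | exact ⟨_, rfl, _, rfl, h64⟩
      | exact ⟨_, rfl, _, rfl, h64.symm⟩
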